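/- Let β > 1 be real and n ≥ 1. A word ω = (ω_1,…,ω_n) ∈ Σ_β^n is full if and only if for every m ∈ ℕ and every ω' = (ω'_1,…,ω'_m) ∈ Σ_β^m, the concatenation ω ∗ ω' = (ω_1,…,ω_n,ω'_1,…,ω'_m) is β-admissible. Moreover, if (ω_1,…,ω_{n−1},ω'_n) is β-admissible with ω'_n > 0, then for every integer ω_n with 0 ≤ ω_n < ω'_n, the word (ω_1,…,ω_{n−1},ω_n) is full. -/

import Mathlib

open Set Filter MeasureTheory
open scoped ENNReal

/-- The β-transformation `x ↦ βx mod 1`. -/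
noncomputable def Tbeta (β : ℝ) (x : ℝ) : ℝ := β * x - ⌊β * x⌋

/-- The asymptotic recurrence exponent
`r_β(x) = sup {r ∈ [0,∞] : |T_β^n x - x| < β^{-rn} for infinitely many n}`. -/
noncomputable def rBeta (β : ℝ) (x : ℝ) : ℝ≥0∞ :=
  ⨆ r ∈ {r : ℝ | 0 ≤ r ∧
      ∃ᶠ n : ℕ in atTop, |(Tbeta β)^[n] x - x| < β ^ (-(r * (n : ℝ)))},
    ENNReal.ofReal r

/-- The uniform recurrence exponent
`r̂_β(x) = sup {r̂ ∈ [0,∞] : ∀ N ≫ 1, ∃ 1 ≤ n ≤ N, |T_β^n x - x| < β^{-r̂N}}`. -/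
noncomputable def rHatBeta (β : ℝ) (x : ℝ) : ℝ≥0∞ :=
  ⨆ r ∈ {r : ℝ | 0 ≤ r ∧
      ∀ᶠ N : ℕ in atTop, ∃ n : ℕ, 1 ≤ n ∧ n ≤ N ∧
        |(Tbeta β)^[n] x - x| < β ^ (-(r * (N : ℝ)))},
    ENNReal.ofReal r

/-- The `n`-th digit `ε_n(x,β) = ⌊β T_β^{n-1} x⌋` of the β-expansion (for `n ≥ 1`). -/
noncomputable def epsDigit (β : ℝ) (x : ℝ) (n : ℕ) : ℤ := ⌊β * (Tbeta β)^[n - 1] x⌋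

/-- A word `ω` of length `n` over the digits is β-admissible if it occurs as the first `n`
digits of the β-expansion of some `x ∈ [0,1)`. -/
def IsAdmissible (β : ℝ) {n : ℕ} (ω : Fin n → ℤ) : Prop :=
  ∃ x ∈ Set.Ico (0 : ℝ) 1, ∀ j : Fin n, epsDigit β x ((j : ℕ) + 1) = ω j

/-- `Σ_β^n`, the set of β-admissible words of length `n`. -/
def SigmaSet (β : ℝ) (n : ℕ) : Set (Fin n → ℤ) := {ω | IsAdmissible β ω}

/-- The cylinder `I_n(ω)` of points of `[0,1)` whose first `n` digits form the word `ω`. -/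
def cylinder (β : ℝ) {n : ℕ} (ω : Fin n → ℤ) : Set ℝ :=
  {x ∈ Set.Ico (0 : ℝ) 1 | ∀ j : Fin n, epsDigit β x ((j : ℕ) + 1) = ω j}

/-- A word `ω` of length `n` is full if its cylinder has length `β^{-n}`. -/
def IsFull (β : ℝ) {n : ℕ} (ω : Fin n → ℤ) : Prop :=
  volume (cylinder β ω) = ENNReal.ofReal ((β ^ n)⁻¹)

variable {β : ℝ}

lemma tbeta_eq_fract (x : ℝ) : Tbeta β x = Int.fract (β * x) := rfl

lemma tbeta_mem (x : ℝ) : Tbeta β x ∈ Set.Ico (0:ℝ) 1 := by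
  rw [tbeta_eq_fract]; exact ⟨Int.fract_nonneg _, Int.fract_lt_one _⟩

lemma iter_mem {x : ℝ} (hx : x ∈ Set.Ico (0:ℝ) 1) (n : ℕ) :
    (Tbeta β)^[n] x ∈ Set.Ico (0:ℝ) 1 := by
  cases n with
  | zero => exact hx
  | succ n => rw [Function.iterate_succ_apply']; exact tbeta_mem _

lemma eps_eq (x : ℝ) (j : ℕ) : epsDigit β x (j+1) = ⌊β * (Tbeta β)^[j] x⌋ := rfl

lemma eps_shift (x : ℝ) (n j : ℕ) :
    epsDigit β x (n + j + 1) = epsDigit β ((Tbeta β)^[n] x) (j + 1) := by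
  rw [eps_eq, eps_eq, ← Function.iterate_add_apply, Nat.add_comm j n]

lemma eps_tbeta (x : ℝ) (j : ℕ) : epsDigit β (Tbeta β x) (j+1) = epsDigit β x (j+2) := by
  have := eps_shift (β := β) x 1 j
  simpa [Nat.add_comm, Nat.add_assoc, Nat.add_left_comm] using this.symm

lemma tbeta_div (hβ : 1 < β) (c : ℤ) {y : ℝ} (hy : y ∈ Set.Ico (0:ℝ) 1) :
    Tbeta β ((c + y)/β) = y ∧ ⌊β * ((c + y)/β)⌋ = c := by
  have hβ0 : β ≠ 0 := by positivity
  have h1 : β * ((c + y)/β) = c + y := by field_simp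
  have h2 : ⌊(c:ℝ) + y⌋ = c := by
    rw [Int.floor_intCast_add]
    simp [Int.floor_eq_zero_iff.mpr hy]
  constructor
  · rw [tbeta_eq_fract, h1, Int.fract, h2]; ring
  · rw [h1, h2]

lemma exists_lower (hβ : 1 < β) :
    ∀ (n : ℕ) (x : ℝ), x ∈ Set.Ico (0:ℝ) 1 → ∀ t : ℝ, 0 ≤ t → t ≤ (Tbeta β)^[n] x →
      ∃ x', x' ∈ Set.Ico (0:ℝ) 1 ∧ (Tbeta β)^[n] x' = t ∧ x' ≤ x ∧
        ∀ j < n, epsDigit β x' (j+1) = epsDigit β x (j+1) := by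
  intro n
  induction n with
  | zero =>
    intro x hx t ht htx
    exact ⟨t, ⟨ht, lt_of_le_of_lt htx hx.2⟩, rfl, htx, fun j hj => absurd hj (Nat.not_lt_zero j)⟩
  | succ n ih =>
    intro x hx t ht htx
    have hβ0 : (0:ℝ) < β := by linarith
    have hTx := tbeta_mem (β := β) x
    rw [Function.iterate_succ_apply] at htx
    obtain ⟨y', hy', hy't, hy'le, hdig⟩ := ih (Tbeta β x) hTx t ht htx
    set c : ℤ := ⌊β * x⌋ with hc_def
    have hc : (0:ℝ) ≤ (c:ℝ) := by
      have : (0:ℤ) ≤ c := Int.floor_nonneg.mpr (mul_nonneg hβ0.le hx.1)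
      exact_mod_cast this
    obtain ⟨hT1, hF1⟩ := tbeta_div hβ c hy'
    have hxeq : x = ((c:ℝ) + Tbeta β x)/β := by
      have : Tbeta β x = β * x - c := rfl
      rw [this]; field_simp; ring
    have hle : ((c:ℝ) + y')/β ≤ x := by
      rw [hxeq]
      gcongr
    refine ⟨((c:ℝ) + y')/β, ⟨?_, lt_of_le_of_lt hle hx.2⟩, ?_, hle, ?_⟩
    · exact div_nonneg (by linarith [hy'.1]) hβ0.le
    · rw [Function.iterate_succ_apply, hT1, hy't]
    · intro j hj
      cases j with
      | zero => rw [eps_eq, eps_eq]; simpa using hF1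
      | succ i =>
        have hi : i < n := by omega
        calc epsDigit β (((c:ℝ) + y')/β) (i+2)
            = epsDigit β (Tbeta β (((c:ℝ) + y')/β)) (i+1) := (eps_tbeta _ _).symm
          _ = epsDigit β y' (i+1) := by rw [hT1]
          _ = epsDigit β (Tbeta β x) (i+1) := hdig i hi
          _ = epsDigit β x (i+2) := eps_tbeta _ _

lemma endpoint_eq (hβ : 1 < β) :
    ∀ (n : ℕ) (x x' : ℝ), x ∈ Set.Ico (0:ℝ) 1 → x' ∈ Set.Ico (0:ℝ) 1 →
      (∀ j < n, epsDigit β x (j+1) = epsDigit β x' (j+1)) →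
      x - (Tbeta β)^[n] x / β^n = x' - (Tbeta β)^[n] x' / β^n := by
  intro n
  induction n with
  | zero => intro x x' _ _ _; simp
  | succ n ih =>
    intro x x' hx hx' hdig
    have hβ0 : (0:ℝ) < β := by linarith
    have hβn : (β:ℝ)^n ≠ 0 := by positivity
    have h0 : ⌊β * x⌋ = ⌊β * x'⌋ := by
      have := hdig 0 (Nat.succ_pos n); rwa [eps_eq, eps_eq] at this
    have hsh : ∀ j < n, epsDigit β (Tbeta β x) (j+1) = epsDigit β (Tbeta β x') (j+1) := by
      intro j hj
      rw [eps_tbeta, eps_tbeta]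
      exact hdig (j+1) (by omega)
    set u := (Tbeta β)^[n] (Tbeta β x) with hu
    set u' := (Tbeta β)^[n] (Tbeta β x') with hu'
    have key := ih (Tbeta β x) (Tbeta β x') (tbeta_mem x) (tbeta_mem x') hsh
    have e1 : Tbeta β x = β * x - ⌊β * x⌋ := rfl
    have e2 : Tbeta β x' = β * x' - ⌊β * x'⌋ := rfl
    have hcast : ((⌊β * x⌋ : ℤ) : ℝ) = ((⌊β * x'⌋ : ℤ) : ℝ) := by exact_mod_cast h0
    have key2 : β * x - u/β^n = β * x' - u'/β^n := by
      rw [hu, hu']; linarith [key, e1, e2, hcast]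
    rw [Function.iterate_succ_apply, Function.iterate_succ_apply, ← hu, ← hu']
    refine mul_left_cancel₀ (ne_of_gt hβ0) ?_
    rw [mul_sub, mul_sub, pow_succ,
      show β * (u / (β^n * β)) = u / β^n by field_simp,
      show β * (u' / (β^n * β)) = u' / β^n by field_simp]
    exact key2

noncomputable def supE (β : ℝ) {n : ℕ} (ω : Fin n → ℤ) : ℝ :=
  sSup ((fun x => (Tbeta β)^[n] x) '' cylinder β ω)

variable {n : ℕ} {ω : Fin n → ℤ}

lemma mem_cylinder {x : ℝ} :
    x ∈ cylinder β ω ↔ x ∈ Set.Ico (0:ℝ) 1 ∧ ∀ j : Fin n, epsDigit β x ((j : ℕ) + 1) = ω j :=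
  Iff.rfl

lemma cyl_sub : cylinder β ω ⊆ Set.Ico (0:ℝ) 1 := fun _ hx => hx.1

lemma E_sub : (fun x => (Tbeta β)^[n] x) '' cylinder β ω ⊆ Set.Ico (0:ℝ) 1 := by
  rintro _ ⟨x, hx, rfl⟩; exact iter_mem hx.1 n

lemma E_bdd : BddAbove ((fun x => (Tbeta β)^[n] x) '' cylinder β ω) :=
  ⟨1, fun e he => (E_sub he).2.le⟩

lemma E_nonempty (hadm : IsAdmissible β ω) :
    ((fun x => (Tbeta β)^[n] x) '' cylinder β ω).Nonempty := by
  obtain ⟨x, hx, hdig⟩ := hadm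
  exact ⟨_, ⟨x, ⟨hx, hdig⟩, rfl⟩⟩

lemma le_supE {x : ℝ} (hx : x ∈ cylinder β ω) : (Tbeta β)^[n] x ≤ supE β ω :=
  le_csSup E_bdd ⟨x, hx, rfl⟩

lemma supE_le_one (hadm : IsAdmissible β ω) : supE β ω ≤ 1 :=
  csSup_le (E_nonempty hadm) (fun e he => (E_sub he).2.le)

lemma supE_nonneg (hadm : IsAdmissible β ω) : 0 ≤ supE β ω := by
  obtain ⟨x, hx, hdig⟩ := hadm
  exact le_trans (iter_mem hx n).1 (le_supE ⟨hx, hdig⟩)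

lemma exists_eq_of_lt_supE (hβ : 1 < β) (hadm : IsAdmissible β ω) {t : ℝ}
    (ht0 : 0 ≤ t) (hts : t < supE β ω) :
    ∃ x' ∈ cylinder β ω, (Tbeta β)^[n] x' = t := by
  obtain ⟨e, ⟨x, hx, rfl⟩, hte⟩ := exists_lt_of_lt_csSup (E_nonempty hadm) hts
  obtain ⟨x', hx', hTx', _, hdig⟩ := exists_lower hβ n x hx.1 t ht0 hte.le
  exact ⟨x', ⟨hx', fun j => (hdig j j.isLt).trans (hx.2 j)⟩, hTx'⟩

lemma isFull_iff_supE (hβ : 1 < β) (hadm : IsAdmissible β ω) :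
    IsFull β ω ↔ supE β ω = 1 := by
  have hβ0 : (0:ℝ) < β := by linarith
  have hβn : (0:ℝ) < β ^ n := by positivity
  obtain ⟨x₀, hx₀, hdig₀⟩ := hadm
  have hx₀c : x₀ ∈ cylinder β ω := ⟨hx₀, hdig₀⟩
  set s := supE β ω with hs_def
  set L : ℝ := x₀ - (Tbeta β)^[n] x₀ / β ^ n with hL_def
  have hL : ∀ x ∈ cylinder β ω, x = L + (Tbeta β)^[n] x / β ^ n := by
    intro x hx
    have := endpoint_eq hβ n x x₀ hx.1 hx₀ ?_
    · rw [hL_def]; linarith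
    · intro j hj
      rw [(hx.2 ⟨j, hj⟩ : _), (hdig₀ ⟨j, hj⟩ : _)]
  have hsub1 : cylinder β ω ⊆ Set.Icc L (L + s / β ^ n) := by
    intro x hx
    have h1 := hL x hx
    have h2 : (Tbeta β)^[n] x ≤ s := le_supE hx
    have h3 : 0 ≤ (Tbeta β)^[n] x := (iter_mem hx.1 n).1
    constructor
    · rw [h1]; have : 0 ≤ (Tbeta β)^[n] x / β ^ n := by positivity
      linarith
    · rw [h1]
      have : (Tbeta β)^[n] x / β ^ n ≤ s / β ^ n := by gcongr
      linarith
  have hsub2 : Set.Ico L (L + s / β ^ n) ⊆ cylinder β ω := by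
    intro y hy
    have ht0 : 0 ≤ (y - L) * β ^ n := by
      have := hy.1; nlinarith
    have hts : (y - L) * β ^ n < s := by
      have h2 := hy.2
      have : y - L < s / β ^ n := by linarith
      calc (y - L) * β ^ n < (s / β ^ n) * β ^ n := by nlinarith
        _ = s := by field_simp
    obtain ⟨x', hx', hTx'⟩ := exists_eq_of_lt_supE hβ ⟨x₀, hx₀, hdig₀⟩ ht0 hts
    have : x' = y := by
      have := hL x' hx'
      rw [hTx'] at this
      rw [this]; field_simp; ring
    rwa [← this]
  have hvol : volume (cylinder β ω) = ENNReal.ofReal (s / β ^ n) := by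
    apply le_antisymm
    · calc volume (cylinder β ω) ≤ volume (Set.Icc L (L + s / β ^ n)) := measure_mono hsub1
        _ = ENNReal.ofReal (s / β ^ n) := by rw [Real.volume_Icc]; ring_nf
    · calc ENNReal.ofReal (s / β ^ n) = volume (Set.Ico L (L + s / β ^ n)) := by
            rw [Real.volume_Ico]; ring_nf
        _ ≤ volume (cylinder β ω) := measure_mono hsub2
  rw [IsFull, hvol]
  have hs0 : 0 ≤ s := supE_nonneg ⟨x₀, hx₀, hdig₀⟩
  rw [ENNReal.ofReal_eq_ofReal_iff (by positivity) (by positivity)]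
  rw [div_eq_iff (ne_of_gt hβn), inv_mul_cancel₀ (ne_of_gt hβn)]

lemma part1 (hβ : 1 < β) (hadm : IsAdmissible β ω) :
    IsFull β ω ↔
      ∀ (m : ℕ) (ω' : Fin m → ℤ), IsAdmissible β ω' →
        IsAdmissible β (Fin.append ω ω') := by
  have hβ0 : (0:ℝ) < β := by linarith
  constructor
  · intro hfull m ω' hadm'
    obtain ⟨y, hy, hydig⟩ := hadm'
    have hs : supE β ω = 1 := (isFull_iff_supE hβ hadm).mp hfull
    have hy' : y < supE β ω := by rw [hs]; exact hy.2
    obtain ⟨x, hxc, hTx⟩ := exists_eq_of_lt_supE hβ hadm hy.1 hy'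
    refine ⟨x, hxc.1, fun j => ?_⟩
    refine Fin.addCases (fun i => ?_) (fun i => ?_) j
    · rw [Fin.append_left]
      have := hxc.2 i
      simpa using this
    · rw [Fin.append_right]
      have h1 : ((Fin.natAdd n i : Fin (n+m)) : ℕ) = n + (i : ℕ) := rfl
      rw [h1, eps_shift, hTx]
      exact hydig i
  · intro hconcat
    rw [isFull_iff_supE hβ hadm]
    by_contra hne
    have hs1 : supE β ω ≤ 1 := supE_le_one hadm
    have hs0 : 0 ≤ supE β ω := supE_nonneg hadm
    have hlt : supE β ω < 1 := lt_of_le_of_ne hs1 hne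
    set s := supE β ω with hs_def
    set t : ℝ := (s + 1)/2 with ht_def
    have ht0 : 0 ≤ t := by rw [ht_def]; linarith
    have ht1 : t < 1 := by rw [ht_def]; linarith
    have hst : s < t := by rw [ht_def]; linarith
    obtain ⟨m, hm⟩ := exists_pow_lt_of_lt_one (show (0:ℝ) < t - s by linarith)
      (show 1/β < 1 by rw [div_lt_one hβ0]; linarith)
    set ω' : Fin m → ℤ := fun j => epsDigit β t ((j:ℕ)+1) with hω'
    obtain ⟨x, hx, hdigx⟩ := hconcat m ω' ⟨t, ⟨ht0, ht1⟩, fun j => rfl⟩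
    have hxc : x ∈ cylinder β ω := by
      refine ⟨hx, fun j => ?_⟩
      have := hdigx (Fin.castAdd m j)
      rwa [Fin.append_left, Fin.coe_castAdd] at this
    have hTmem : (Tbeta β)^[n] x ∈ Set.Ico (0:ℝ) 1 := iter_mem hx n
    have hdigT : ∀ j < m, epsDigit β ((Tbeta β)^[n] x) (j+1) = epsDigit β t (j+1) := by
      intro j hj
      have := hdigx (Fin.natAdd n ⟨j, hj⟩)
      rw [Fin.append_right] at this
      rw [show ((Fin.natAdd n (⟨j,hj⟩ : Fin m) : Fin (n+m)) : ℕ) = n + j from rfl] at this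
      rw [← eps_shift]
      exact this
    have hend := endpoint_eq hβ m ((Tbeta β)^[n] x) t hTmem ⟨ht0, ht1⟩ hdigT
    have hβm : (0:ℝ) < β^m := by positivity
    have h1 := iter_mem (β := β) hTmem m
    have h2 := iter_mem (β := β) (Set.mem_Ico.mpr ⟨ht0, ht1⟩) m
    have hle : (Tbeta β)^[n] x ≤ s := le_supE hxc
    have e1 : (Tbeta β)^[m] t / β^m < 1/β^m := by gcongr; exacts [h2.2]
    have e2 : 0 ≤ (Tbeta β)^[m] ((Tbeta β)^[n] x) / β^m := div_nonneg h1.1 hβm.le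
    have e3 : (1:ℝ)/β^m = (1/β)^m := by rw [div_pow, one_pow]
    linarith [hend, e1, e2, hm, hle]

lemma part2 (hβ : 1 < β) (k : ℕ) (w : Fin k → ℤ) (b : ℤ)
    (hadm : IsAdmissible β (Fin.snoc w b : Fin (k+1) → ℤ))
    (a : ℤ) (ha0 : 0 ≤ a) (hab : a < b) :
    IsFull β (Fin.snoc w a : Fin (k+1) → ℤ) := by
  have hβ0 : (0:ℝ) < β := by linarith
  obtain ⟨x, hx, hdigx⟩ := hadm
  have hw : ∀ i : Fin k, epsDigit β x ((i:ℕ)+1) = w i := by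
    intro i
    have := hdigx (Fin.castSucc i)
    rwa [Fin.snoc_castSucc] at this
  have hbfloor : ⌊β * (Tbeta β)^[k] x⌋ = b := by
    have := hdigx (Fin.last k)
    rwa [Fin.snoc_last] at this
  have hby : (b:ℝ) ≤ β * (Tbeta β)^[k] x := by
    rw [← hbfloor]; exact Int.floor_le _
  have main : ∀ t : ℝ, 0 ≤ t → t < 1 →
      ∃ x', x' ∈ cylinder β (Fin.snoc w a : Fin (k+1) → ℤ) ∧ (Tbeta β)^[k+1] x' = t := by
    intro t ht0 ht1
    set y' : ℝ := ((a:ℝ) + t)/β with hy'def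
    have ha0' : (0:ℝ) ≤ (a:ℝ) := by exact_mod_cast ha0
    have hat : (a:ℝ) + t < (b:ℝ) := by
      have : (a:ℝ) + 1 ≤ b := by exact_mod_cast hab
      linarith
    have hy'0 : 0 ≤ y' := div_nonneg (by linarith) hβ0.le
    have hy'le : y' ≤ (Tbeta β)^[k] x := by
      rw [hy'def, div_le_iff₀ hβ0, mul_comm]
      linarith
    obtain ⟨hTy', hFy'⟩ := tbeta_div hβ a (Set.mem_Ico.mpr ⟨ht0, ht1⟩)
    obtain ⟨x', hx'm, hTx', _, hdig'⟩ := exists_lower hβ k x hx y' hy'0 hy'le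
    refine ⟨x', ⟨hx'm, fun j => ?_⟩, ?_⟩
    · refine Fin.lastCases ?_ (fun i => ?_) j
      · rw [Fin.snoc_last]
        show epsDigit β x' (k+1) = a
        rw [eps_eq, hTx', hy'def, hFy']
      · rw [Fin.snoc_castSucc]
        have h1 : ((Fin.castSucc i : Fin (k+1)) : ℕ) = (i : ℕ) := rfl
        rw [h1, hdig' i i.isLt]
        exact hw i
    · rw [Function.iterate_succ_apply', hTx', hy'def, hTy']
  obtain ⟨x₁, hx₁c, _⟩ := main 0 le_rfl one_pos
  have hadm' : IsAdmissible β (Fin.snoc w a : Fin (k+1) → ℤ) := ⟨x₁, hx₁c.1, hx₁c.2⟩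
  rw [isFull_iff_supE hβ hadm']
  refine le_antisymm (supE_le_one hadm') ?_
  by_contra hlt
  push_neg at hlt
  have hs0 : 0 ≤ supE β (Fin.snoc w a : Fin (k+1) → ℤ) := supE_nonneg hadm'
  obtain ⟨x', hx'c, hTx'⟩ := main ((supE β (Fin.snoc w a : Fin (k+1) → ℤ) + 1)/2)
    (by linarith) (by linarith)
  have hle := le_supE hx'c
  rw [hTx'] at hle
  linarith


theorem full_word_characterization (β : ℝ) (hβ : 1 < β) :
    (∀ n : ℕ, 1 ≤ n → ∀ ω : Fin n → ℤ, IsAdmissible β ω →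
      (IsFull β ω ↔
        ∀ (m : ℕ) (ω' : Fin m → ℤ), IsAdmissible β ω' →
          IsAdmissible β (Fin.append ω ω'))) ∧
    (∀ (k : ℕ) (w : Fin k → ℤ) (b : ℤ), 0 < b →
      IsAdmissible β (Fin.snoc w b : Fin (k + 1) → ℤ) →
      ∀ a : ℤ, 0 ≤ a → a < b → IsFull β (Fin.snoc w a : Fin (k + 1) → ℤ)) :=
  ⟨fun n _ ω hadm => part1 hβ hadm,
   fun k w b _ hadm a ha0 hab => part2 hβ k w b hadm a ha0 hab⟩
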